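/- arXiv:0704.1846 — 5 statements merged into one kernel-verified Lean document; each statement's English description precedes it below -/
import Mathlib

section
/- Let λ = (λ₁|λ₂) be a bipartition of n with l = |λ₁|, and let Y_{l,n-l} be the set of minimal-length left coset representatives of the Young subgroup S_l × S_{n-l} in the symmetric group S_n. If s is a row-standard λ-bitableau, t is a row-standard λ-bitableau whose first component is filled with 1,...,l and second component with l+1,...,n, and y ∈ Y_{l,n-l} satisfies d(s) = y·d(t) (where d(u) is the unique permutation sending the canonical bitableau t^λ to u), then s is a standard bitableau if and only if t is a standard bitableau. -/
/-- The sum of the first `j` parts of a partition, encoded as a function `ℕ → ℕ`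
listing its parts in weakly decreasing order (extended by zeros). -/
def psum (f : ℕ → ℕ) (j : ℕ) : ℕ := ∑ i ∈ Finset.range j, f i

/-- `(f1 | f2)` is a bipartition of `n`: each component is a weakly decreasing
function `ℕ → ℕ` (the list of parts, extended by zeros) and the sizes add up to `n`. -/
def IsBipartitionOf (n : ℕ) (f1 f2 : ℕ → ℕ) : Prop :=
  Antitone f1 ∧ Antitone f2 ∧ (∀ i, n ≤ i → f1 i = 0) ∧ (∀ i, n ≤ i → f2 i = 0) ∧
    psum f1 n + psum f2 n = n

/-- The dominance order on bipartitions of `n`:  `(f1|f2) ⊴ (g1|g2)` iff for all `j`,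
`Σ_{i≤j} f1⁽ⁱ⁾ ≤ Σ_{i≤j} g1⁽ⁱ⁾` and `|f1| + Σ_{i≤j} f2⁽ⁱ⁾ ≤ |g1| + Σ_{i≤j} g2⁽ⁱ⁾`. -/
def Dom (n : ℕ) (f1 f2 g1 g2 : ℕ → ℕ) : Prop :=
  (∀ j, psum f1 j ≤ psum g1 j) ∧ ∀ j, psum f1 n + psum f2 j ≤ psum g1 n + psum g2 j

/-- The length of row `i` of component `c` (`false` = first component) of the
bipartition `(f1|f2)`. -/
def part (f1 f2 : ℕ → ℕ) (c : Bool) (i : ℕ) : ℕ := bif c then f2 i else f1 i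

/-- `T` is a `λ`-bitableau for `λ = (f1|f2)` a bipartition of `n`: a filling of the
cells of the pair of Young diagrams by the numbers `0, …, n-1` (0-based version of
`1, …, n`), each used exactly once. -/
def IsBitableau (n : ℕ) (f1 f2 : ℕ → ℕ) (T : Bool → ℕ → ℕ → ℕ) : Prop :=
  (∀ c i j, j < part f1 f2 c i → T c i j < n) ∧
    ∀ m, m < n → ∃! x : Bool × ℕ × ℕ,
      x.2.2 < part f1 f2 x.1 x.2.1 ∧ T x.1 x.2.1 x.2.2 = m

/-- A bitableau is row-standard if its entries increase along the rows of each
component. -/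
def RowStandard (f1 f2 : ℕ → ℕ) (T : Bool → ℕ → ℕ → ℕ) : Prop :=
  ∀ c i j, j + 1 < part f1 f2 c i → T c i j < T c i (j + 1)

/-- A bitableau is standard if its entries increase along rows and down columns in
each component. -/
def Standard (f1 f2 : ℕ → ℕ) (T : Bool → ℕ → ℕ → ℕ) : Prop :=
  RowStandard f1 f2 T ∧ ∀ c i j, j < part f1 f2 c (i + 1) → T c i j < T c (i + 1) j

/-- The entry of the canonical bitableau `t^λ` at cell `(c,i,j)`: the first component
is filled row by row with `0, …, l-1` and the second row by row with `l, …, n-1`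
(0-based version of `1, …, l` and `l+1, …, n`), where `l = |f1| = psum f1 n`. -/
def canon (n : ℕ) (f1 f2 : ℕ → ℕ) (c : Bool) (i j : ℕ) : ℕ :=
  bif c then psum f1 n + psum f2 i + j else psum f1 i + j

/-- `w = d(T)` is the unique permutation of `{0, …, n-1}` sending the canonical
bitableau `t^λ` to `T`. -/
def IsD (n : ℕ) (f1 f2 : ℕ → ℕ) (T : Bool → ℕ → ℕ → ℕ) (w : Equiv.Perm ℕ) : Prop :=
  (∀ i, n ≤ i → w i = i) ∧
    ∀ c i j, j < part f1 f2 c i → w (canon n f1 f2 c i j) = T c i j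

/-- The Coxeter length of a permutation of `{0, …, n-1}`: its number of inversions. -/
def invNum (n : ℕ) (w : Equiv.Perm ℕ) : ℕ :=
  ((Finset.range n ×ˢ Finset.range n).filter fun p => p.1 < p.2 ∧ w p.2 < w p.1).card

/-- `y ∈ Y_{l,n-l}`: a permutation of `{0, …, n-1}` increasing on `{0, …, l-1}` and on
`{l, …, n-1}`; these are the minimal-length left coset representatives of the Young
subgroup `S_l × S_{n-l}` in `S_n`. -/
def IsY (n l : ℕ) (y : Equiv.Perm ℕ) : Prop :=
  (∀ i, n ≤ i → y i = i) ∧ (∀ i, i + 1 < l → y i < y (i + 1)) ∧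
    ∀ i, l ≤ i → i + 1 < n → y i < y (i + 1)

lemma incr_block {y : Equiv.Perm ℕ} {lo hi : ℕ}
    (h : ∀ i, lo ≤ i → i + 1 < hi → y i < y (i + 1)) :
    ∀ a b, lo ≤ a → a < b → b < hi → y a < y b := by
  intro a b ha hab hb
  induction b, hab using Nat.le_induction with
  | base => exact h a ha hb
  | succ b hb' ih => exact lt_trans (ih (by omega)) (h b (by omega) hb)

lemma cmp_block {y : Equiv.Perm ℕ} {lo hi : ℕ}
    (h : ∀ i, lo ≤ i → i + 1 < hi → y i < y (i + 1)) {a b : ℕ}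
    (ha : lo ≤ a) (ha' : a < hi) (hb : lo ≤ b) (hb' : b < hi) :
    a < b ↔ y a < y b := by
  constructor
  · exact fun hab => incr_block h a b ha hab hb'
  · intro hy
    rcases lt_trichotomy a b with h1 | h1 | h1
    · exact h1
    · subst h1; exact absurd hy (lt_irrefl _)
    · exact absurd (incr_block h b a hb h1 ha') (by omega)

/-- if `s`, `t` are row-standard `λ`-bitableaux, the first component of
`t` is filled with `0, …, l-1` (0-based version of `1, …, l`) where `l = |λ₁|`,
`y ∈ Y_{l,n-l}`, and `d(s) = y·d(t)`, then `s` is standard iff `t` is standard. -/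
theorem standard_iff_standard (n : ℕ) (f1 f2 : ℕ → ℕ) (hbp : IsBipartitionOf n f1 f2)
    (S T : Bool → ℕ → ℕ → ℕ) (y ds dt : Equiv.Perm ℕ)
    (hS : IsBitableau n f1 f2 S) (hSrow : RowStandard f1 f2 S)
    (hT : IsBitableau n f1 f2 T) (hTrow : RowStandard f1 f2 T)
    (hTfirst : ∀ i j, j < f1 i → T false i j < psum f1 n)
    (hy : IsY n (psum f1 n) y)
    (hds : IsD n f1 f2 S ds) (hdt : IsD n f1 f2 T dt)
    (heq : ds = y * dt) :
    Standard f1 f2 S ↔ Standard f1 f2 T := by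
  set l := psum f1 n with hl
  have hln : l ≤ n := Nat.le.intro hbp.2.2.2.2
  -- every entry of the second component of T is ≥ l
  have hTsecond : ∀ i j, j < f2 i → l ≤ T true i j := by
    intro i j hj
    by_contra hcon
    push_neg at hcon
    set cells : Finset ((_ : ℕ) × ℕ) := (Finset.range n).sigma fun i => Finset.range (f1 i)
      with hc
    have hcard : cells.card = l := by
      simp [hc, Finset.card_sigma, hl, psum]
    have hmem : ∀ x ∈ cells, (x.2 < part f1 f2 false x.1) := by
      intro x hx
      simp [hc, Finset.mem_sigma] at hx
      simpa [part] using hx.2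
    have hsurj := Finset.surj_on_of_inj_on_of_card_le
      (s := cells) (t := Finset.range l) (fun x _ => T false x.1 x.2)
      (fun x hx => by
        simpa using hTfirst x.1 x.2 (by simpa [part] using hmem x hx))
      (fun x x' hx hx' hxx' => by
        have h1 := hmem x hx
        have h2 := hmem x' hx'
        have hbound : T false x.1 x.2 < n := hT.1 false x.1 x.2 h1
        obtain ⟨w, hw, huniq⟩ := hT.2 (T false x.1 x.2) hbound
        have e1 := huniq (false, x.1, x.2) ⟨h1, rfl⟩
        have e2 := huniq (false, x'.1, x'.2) ⟨h2, hxx'.symm⟩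
        have e1 := e1.trans e2.symm
        simp at e1
        exact Sigma.ext e1.1 (heq_of_eq e1.2))
      (by simp [hcard])
      (T true i j) (by simpa using hcon)
    obtain ⟨x, hx, hxval⟩ := hsurj
    have hjt : j < part f1 f2 true i := by simpa [part] using hj
    have hbound : T true i j < n := hT.1 true i j hjt
    obtain ⟨w, hw, huniq⟩ := hT.2 (T true i j) hbound
    have e1 := huniq (false, x.1, x.2) ⟨hmem x hx, hxval.symm⟩
    have e2 := huniq (true, i, j) ⟨hjt, rfl⟩
    have e1 := e1.trans e2.symm
    simp at e1
  have hST : ∀ c i j, j < part f1 f2 c i → S c i j = y (T c i j) := by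
    intro c i j hj
    have h1 := hds.2 c i j hj
    have h2 := hdt.2 c i j hj
    rw [heq] at h1
    simp [Equiv.Perm.mul_apply] at h1
    rw [h2] at h1
    exact h1.symm
  have hcmp : ∀ c i j i' j', j < part f1 f2 c i → j' < part f1 f2 c i' →
      (T c i j < T c i' j' ↔ S c i j < S c i' j') := by
    intro c i j i' j' hj hj'
    rw [hST c i j hj, hST c i' j' hj']
    cases c with
    | false =>
      exact cmp_block (lo := 0) (hi := l) (fun a _ hb => hy.2.1 a hb)
        (Nat.zero_le _) (hTfirst i j (by simpa [part] using hj))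
        (Nat.zero_le _) (hTfirst i' j' (by simpa [part] using hj'))
    | true =>
      exact cmp_block (lo := l) (hi := n) hy.2.2
        (hTsecond i j (by simpa [part] using hj)) (hT.1 true i j hj)
        (hTsecond i' j' (by simpa [part] using hj')) (hT.1 true i' j' hj')
  have hpart_anti : ∀ c i, part f1 f2 c (i + 1) ≤ part f1 f2 c i := by
    intro c i
    cases c
    · exact hbp.1 (Nat.le_succ i)
    · exact hbp.2.1 (Nat.le_succ i)
  constructor
  · intro hSst
    refine ⟨hTrow, fun c i j hj => ?_⟩
    have hj' : j < part f1 f2 c i := lt_of_lt_of_le hj (hpart_anti c i)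
    exact (hcmp c i j (i + 1) j hj' hj).mpr (hSst.2 c i j hj)
  · intro hTst
    refine ⟨hSrow, fun c i j hj => ?_⟩
    have hj' : j < part f1 f2 c i := lt_of_lt_of_le hj (hpart_anti c i)
    exact (hcmp c i j (i + 1) j hj' hj).mp (hTst.2 c i j hj)
end

section
/- For bipartitions λ = (λ₁|λ₂) and μ = (μ₁|μ₂) of n, one has (λ₁|λ₂) ⊴ (μ₂|μ₁*) if and only if (μ₁|μ₂*) ⊴ (λ₂*|λ₁*), where ν* denotes the conjugate (transpose) partition and ⊴ is the dominance order on bipartitions. -/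
/-- The conjugate (transpose) of a partition of a number at most `n`:
`f*(i) = #{j : f(j) > i}`. -/
def conj (n : ℕ) (f : ℕ → ℕ) (i : ℕ) : ℕ :=
  ((Finset.range n).filter fun j => i < f j).card

lemma psum_le_psum (f : ℕ → ℕ) {j k : ℕ} (h : j ≤ k) : psum f j ≤ psum f k :=
  Finset.sum_le_sum_of_subset (Finset.range_subset_range.2 h)

lemma psum_stable {n : ℕ} {f : ℕ → ℕ} (h0 : ∀ i, n ≤ i → f i = 0) {j : ℕ} (h : n ≤ j) :
    psum f j = psum f n := by
  refine (Finset.sum_subset (Finset.range_subset_range.2 h) ?_).symm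
  intro i hi hni
  exact h0 i (by simpa using hni)

lemma part_le {n : ℕ} {f : ℕ → ℕ} {i : ℕ} (hi : i < n) : f i ≤ psum f n :=
  Finset.single_le_sum (fun _ _ => Nat.zero_le _) (Finset.mem_range.2 hi)

lemma filter_lt_range (c m : ℕ) :
    (Finset.range m).filter (fun i => i < c) = Finset.range (min c m) := by
  ext i; simp [Finset.mem_filter, Finset.mem_range]; omega

lemma psum_conj (n : ℕ) (f : ℕ → ℕ) (m : ℕ) :
    psum (conj n f) m = ∑ j ∈ Finset.range n, min (f j) m := by
  unfold psum conj
  simp_rw [Finset.card_filter]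
  rw [Finset.sum_comm]
  refine Finset.sum_congr rfl fun j _ => ?_
  rw [← Finset.card_filter, filter_lt_range, Finset.card_range]

-- split of range sum
lemma sum_range_split (g : ℕ → ℕ) {k n : ℕ} (h : k ≤ n) :
    ∑ j ∈ Finset.range n, g j = (∑ j ∈ Finset.range k, g j) + ∑ j ∈ Finset.Ico k n, g j := by
  simp only [Finset.range_eq_Ico]
  exact (Finset.sum_Ico_consecutive _ (Nat.zero_le _) h).symm

-- duality inequality
lemma dual_ineq {n : ℕ} {f : ℕ → ℕ} (h0 : ∀ i, n ≤ i → f i = 0) (k m : ℕ) :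
    psum f k + psum (conj n f) m ≤ k * m + psum f n := by
  rcases le_or_gt k n with hk | hk
  · rw [psum_conj, sum_range_split (fun j => min (f j) m) hk]
    have h1 : ∑ j ∈ Finset.range k, min (f j) m ≤ k * m := by
      calc ∑ j ∈ Finset.range k, min (f j) m ≤ ∑ _j ∈ Finset.range k, m :=
            Finset.sum_le_sum fun j _ => min_le_right _ _
        _ = k * m := by simp [mul_comm]
    have h2 : ∑ j ∈ Finset.Ico k n, min (f j) m ≤ ∑ j ∈ Finset.Ico k n, f j :=
      Finset.sum_le_sum fun j _ => min_le_left _ _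
    have h3 : psum f n = psum f k + ∑ j ∈ Finset.Ico k n, f j := sum_range_split f hk
    omega
  · have h1 : psum f k = psum f n := psum_stable h0 hk.le
    have h2 : psum (conj n f) m ≤ n * m := by
      rw [psum_conj]
      calc ∑ j ∈ Finset.range n, min (f j) m ≤ ∑ _j ∈ Finset.range n, m :=
            Finset.sum_le_sum fun j _ => min_le_right _ _
        _ = n * m := by simp [mul_comm]
    have h3 : n * m ≤ k * m := Nat.mul_le_mul_right m hk.le
    omega

-- Galois-type iff for conjugate
lemma lt_conj_iff {n : ℕ} {f : ℕ → ℕ} (hf : Antitone f) (j m : ℕ) :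
    j < conj n f m ↔ j < n ∧ m < f j := by
  unfold conj
  constructor
  · intro h
    have hsub : (Finset.range n).filter (fun t => m < f t) ⊆ Finset.range n :=
      Finset.filter_subset _ _
    have hjn : j < n := lt_of_lt_of_le h (by simpa using Finset.card_le_card hsub)
    refine ⟨hjn, ?_⟩
    by_contra hmf
    push_neg at hmf
    have : (Finset.range n).filter (fun t => m < f t) ⊆ Finset.range j := by
      intro t ht
      simp only [Finset.mem_filter, Finset.mem_range] at ht ⊢
      by_contra htj
      push_neg at htj
      exact absurd (lt_of_lt_of_le ht.2 (le_trans (hf htj) hmf)) (lt_irrefl m)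
    have := Finset.card_le_card this
    simp only [Finset.card_range] at this
    omega
  · rintro ⟨hjn, hmf⟩
    have : Finset.range (j + 1) ⊆ (Finset.range n).filter (fun t => m < f t) := by
      intro t ht
      simp only [Finset.mem_range] at ht
      simp only [Finset.mem_filter, Finset.mem_range]
      exact ⟨lt_of_le_of_lt (Nat.le_of_lt_succ ht) hjn,
        lt_of_lt_of_le hmf (hf (Nat.le_of_lt_succ ht))⟩
    have := Finset.card_le_card this
    simpa using this

lemma conj_le (n : ℕ) (f : ℕ → ℕ) (m : ℕ) : conj n f m ≤ n := by
  have := Finset.card_filter_le (Finset.range n) (fun j => m < f j)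
  simpa [conj] using this

lemma conj_antitone (n : ℕ) (f : ℕ → ℕ) : Antitone (conj n f) := by
  intro a b hab
  apply Finset.card_le_card
  intro j hj
  simp only [Finset.mem_filter, Finset.mem_range] at hj ⊢
  exact ⟨hj.1, lt_of_le_of_lt hab hj.2⟩

-- duality equality at k = conj n f m
lemma dual_eq_conj {n : ℕ} {f : ℕ → ℕ} (hf : Antitone f) (m : ℕ) :
    psum f (conj n f m) + psum (conj n f) m = (conj n f m) * m + psum f n := by
  set k := conj n f m with hk
  have hkn : k ≤ n := conj_le n f m
  rw [psum_conj, sum_range_split (fun j => min (f j) m) hkn]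
  have h1 : ∑ j ∈ Finset.range k, min (f j) m = k * m := by
    have heq : ∀ j ∈ Finset.range k, min (f j) m = m := by
      intro j hj
      simp only [Finset.mem_range] at hj
      have := ((lt_conj_iff (n := n) hf j m).1 (hk ▸ hj)).2
      omega
    rw [Finset.sum_congr rfl heq]
    simp [mul_comm]
  have h2 : ∑ j ∈ Finset.Ico k n, min (f j) m = ∑ j ∈ Finset.Ico k n, f j := by
    refine Finset.sum_congr rfl fun j hj => ?_
    simp only [Finset.mem_Ico] at hj
    have : ¬ (j < k) := not_lt.2 hj.1
    have : ¬ (m < f j) := fun hm => this ((lt_conj_iff hf j m).2 ⟨hj.2, hm⟩)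
    omega
  have h3 : psum f n = psum f k + ∑ j ∈ Finset.Ico k n, f j := sum_range_split f hkn
  omega

-- duality equality at m = f j, for j ≤ n
lemma dual_eq_part {n : ℕ} {f : ℕ → ℕ} (hf : Antitone f) {j : ℕ} (hj : j ≤ n) :
    psum f j + psum (conj n f) (f j) = j * f j + psum f n := by
  rw [psum_conj, sum_range_split (fun t => min (f t) (f j)) hj]
  have h1 : ∑ t ∈ Finset.range j, min (f t) (f j) = j * f j := by
    have heq : ∀ t ∈ Finset.range j, min (f t) (f j) = f j := by
      intro t ht
      simp only [Finset.mem_range] at ht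
      have := hf ht.le
      omega
    rw [Finset.sum_congr rfl heq]
    simp [mul_comm]
  have h2 : ∑ t ∈ Finset.Ico j n, min (f t) (f j) = ∑ t ∈ Finset.Ico j n, f t := by
    refine Finset.sum_congr rfl fun t ht => ?_
    simp only [Finset.mem_Ico] at ht
    have := hf ht.1
    omega
  have h3 : psum f n = psum f j + ∑ t ∈ Finset.Ico j n, f t := sum_range_split f hj
  omega

-- size preservation
lemma psum_conj_self {n : ℕ} {f : ℕ → ℕ} (hn : psum f n ≤ n) :
    psum (conj n f) n = psum f n := by
  rw [psum_conj]
  refine Finset.sum_congr rfl fun j hj => ?_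
  simp only [Finset.mem_range] at hj
  have := part_le (f := f) hj
  omega

-- conj vanishes at ≥ n
lemma conj_vanish {n : ℕ} {f : ℕ → ℕ} (hn : psum f n ≤ n) {i : ℕ} (hi : n ≤ i) :
    conj n f i = 0 := by
  unfold conj
  rw [Finset.card_eq_zero, Finset.filter_eq_empty_iff]
  intro j hj
  simp only [Finset.mem_range] at hj
  have := part_le (f := f) hj
  omega

-- conj conj = id
lemma conj_conj {n : ℕ} {f : ℕ → ℕ} (hf : Antitone f) (h0 : ∀ i, n ≤ i → f i = 0)
    (hn : psum f n ≤ n) (i : ℕ) : conj n (conj n f) i = f i := by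
  rcases lt_or_ge i n with hi | hi
  · have : (Finset.range n).filter (fun j => i < conj n f j)
        = (Finset.range n).filter (fun j => j < f i) := by
      refine Finset.filter_congr fun j hj => ?_
      rw [lt_conj_iff hf i j]
      simp [hi]
    show ((Finset.range n).filter fun j => i < conj n f j).card = f i
    rw [this, filter_lt_range, Finset.card_range]
    have := part_le (f := f) hi
    omega
  · rw [conj_vanish ?_ hi, (h0 i hi)]
    rw [psum_conj_self hn]; exact hn

lemma domE {n : ℕ} {f g : ℕ → ℕ} (hf : Antitone f) (hg : Antitone g)
    (hf0 : ∀ i, n ≤ i → f i = 0) (hg0 : ∀ i, n ≤ i → g i = 0) :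
    (∀ j, psum f j ≤ psum g j) ↔
      (∀ m, psum f n + psum (conj n g) m ≤ psum g n + psum (conj n f) m) := by
  constructor
  · intro h m
    set k := conj n f m with hk
    have e1 : psum f k + psum (conj n f) m = k * m + psum f n := dual_eq_conj hf m
    have i1 : psum g k + psum (conj n g) m ≤ k * m + psum g n := dual_ineq hg0 k m
    have := h k
    omega
  · intro h j
    rcases le_or_gt j n with hj | hj
    · set m := g j with hm
      have e1 : psum g j + psum (conj n g) m = j * m + psum g n := dual_eq_part hg hj
      have i1 : psum f j + psum (conj n f) m ≤ j * m + psum f n := dual_ineq hf0 j m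
      have := h m
      omega
    · rw [psum_stable hf0 hj.le, psum_stable hg0 hj.le]
      have z1 : psum (conj n g) 0 = 0 := by simp [psum]
      have z2 : psum (conj n f) 0 = 0 := by simp [psum]
      have := h 0
      omega

/-- for bipartitions `λ = (λ₁|λ₂)` and `μ = (μ₁|μ₂)` of `n`,
`(λ₁|λ₂) ⊴ (μ₂|μ₁*)` if and only if `(μ₁|μ₂*) ⊴ (λ₂*|λ₁*)`. -/
theorem dominance_conjugate_iff (n : ℕ) (l1 l2 m1 m2 : ℕ → ℕ)
    (hl : IsBipartitionOf n l1 l2) (hm : IsBipartitionOf n m1 m2) :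
    Dom n l1 l2 m2 (conj n m1) ↔
      Dom n m1 (conj n m2) (conj n l2) (conj n l1) := by
  obtain ⟨hl1a, hl2a, hl10, hl20, hlsum⟩ := hl
  obtain ⟨hm1a, hm2a, hm10, hm20, hmsum⟩ := hm
  have hl2n : psum l2 n ≤ n := by omega
  have hL2 : psum (conj n l2) n = psum l2 n := psum_conj_self hl2n
  have hcc : conj n (conj n l2) = l2 := funext (conj_conj hl2a hl20 hl2n)
  have hAD : (∀ j, psum l1 j ≤ psum m2 j) ↔
      (∀ j, psum m1 n + psum (conj n m2) j ≤ psum (conj n l2) n + psum (conj n l1) j) := by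
    rw [domE hl1a hm2a hl10 hm20]
    constructor
    · intro h j; have := h j; omega
    · intro h j; have := h j; omega
  have hBC : (∀ j, psum l1 n + psum l2 j ≤ psum m2 n + psum (conj n m1) j) ↔
      (∀ j, psum m1 j ≤ psum (conj n l2) j) := by
    rw [domE hm1a (conj_antitone n l2) hm10 (fun i hi => conj_vanish hl2n hi)]
    rw [hcc, hL2]
    constructor
    · intro h j; have := h j; omega
    · intro h j; have := h j; omega
  constructor
  · rintro ⟨hA, hB⟩; exact ⟨hBC.1 hB, hAD.1 hA⟩
  · rintro ⟨hC, hD⟩; exact ⟨hAD.2 hD, hBC.2 hC⟩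
end

section
/- With ρ_λ and ρ the two 3-dimensional matrix representations of the Hecke algebra H₃ of type B₃ over A = ℤ[V^{±1}, v^{±1}] given by: ρ_λ(T_t) = [[V, Vv^{−1}+V^{−1}v, Vv^{−2}+V^{−1}v²],[0,−V^{−1},0],[0,0,−V^{−1}]], ρ_λ(T_{s₁}) = [[−v^{−1},0,0],[1,v,0],[0,0,v]], ρ_λ(T_{s₂}) = [[v,1,0],[0,−v^{−1},0],[0,1,v]], and ρ(T_t) = [[−V^{−1},0,0],[0,−V^{−1},0],[1, Vv^{−1}+V^{−1}v, V]], ρ(T_{s₁}) = [[v,0,0],[0,v,1],[0,0,−v^{−1}]], ρ(T_{s₂}) = [[v, Vv^{−2}+V^{−1}v², 0],[0,−v^{−1},0],[0,1,v]], the matrix P = [[0,0,Vv^{−2}+V^{−1}v²],[0,1,0],[1,0,0]] satisfies P·ρ_λ(T_s) = ρ(T_s)·P for each s ∈ {t, s₁, s₂}. -/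
/-- The ring `A = ℤ[V^{±1}, v^{±1}]` of Laurent polynomials in two independent
indeterminates `V`, `v`, realised as the group algebra of `ℤ²` over `ℤ`. -/
abbrev LA : Type := AddMonoidAlgebra ℤ (ℤ × ℤ)

/-- The monomial `Vⁱ vʲ` of `A`. -/
noncomputable def mon (i j : ℤ) : LA := AddMonoidAlgebra.single (i, j) 1

/-- `ρ_λ(T_t)`. -/
noncomputable def Mt : Matrix (Fin 3) (Fin 3) LA :=
  !![mon 1 0, mon 1 (-1) + mon (-1) 1, mon 1 (-2) + mon (-1) 2;
     0, -mon (-1) 0, 0;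
     0, 0, -mon (-1) 0]

/-- `ρ_λ(T_{s₁})`. -/
noncomputable def Ms1 : Matrix (Fin 3) (Fin 3) LA :=
  !![-mon 0 (-1), 0, 0;
     1, mon 0 1, 0;
     0, 0, mon 0 1]

/-- `ρ_λ(T_{s₂})`. -/
noncomputable def Ms2 : Matrix (Fin 3) (Fin 3) LA :=
  !![mon 0 1, 1, 0;
     0, -mon 0 (-1), 0;
     0, 1, mon 0 1]

/-- `ρ(T_t)`. -/
noncomputable def Nt : Matrix (Fin 3) (Fin 3) LA :=
  !![-mon (-1) 0, 0, 0;
     0, -mon (-1) 0, 0;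
     1, mon 1 (-1) + mon (-1) 1, mon 1 0]

/-- `ρ(T_{s₁})`. -/
noncomputable def Ns1 : Matrix (Fin 3) (Fin 3) LA :=
  !![mon 0 1, 0, 0;
     0, mon 0 1, 1;
     0, 0, -mon 0 (-1)]

/-- `ρ(T_{s₂})`. -/
noncomputable def Ns2 : Matrix (Fin 3) (Fin 3) LA :=
  !![mon 0 1, mon 1 (-2) + mon (-1) 2, 0;
     0, -mon 0 (-1), 0;
     0, 1, mon 0 1]

/-- The intertwining matrix `P`. -/
noncomputable def Pmat : Matrix (Fin 3) (Fin 3) LA :=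
  !![0, 0, mon 1 (-2) + mon (-1) 2;
     0, 1, 0;
     1, 0, 0]

/-- `P·ρ_λ(T_s) = ρ(T_s)·P` for each `s ∈ {t, s₁, s₂}`. -/
theorem P_intertwines :
    Pmat * Mt = Nt * Pmat ∧ Pmat * Ms1 = Ns1 * Pmat ∧ Pmat * Ms2 = Ns2 * Pmat := by
  have key : ∀ i j : ℤ, mon i j * mon (-i) (-j) = 1 := by
    intro i j
    simp [mon, AddMonoidAlgebra.single_mul_single, AddMonoidAlgebra.one_def]
    rfl
  refine ⟨?_, ?_, ?_⟩ <;>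
    · ext i j
      fin_cases i <;> fin_cases j <;>
        simp [Pmat, Mt, Nt, Ms1, Ns1, Ms2, Ns2, Matrix.mul_apply, Fin.sum_univ_succ,
          mon, AddMonoidAlgebra.single_mul_single, AddMonoidAlgebra.one_def, mul_add, add_mul] <;>
        ring
end

section
/- Let A = ℤ[V^{±1}, v^{±1}] and P = [[0,0,Vv^{−2}+V^{−1}v²],[0,1,0],[1,0,0]] ∈ M₃(A). Then there is no element c of the field of fractions K of A such that all entries of cP lie in A and det(cP) is a unit of A. -/
noncomputable instance : IsDomain LA := NoZeroDivisors.to_isDomain _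

/-- The augmentation map sending every monomial to `1`. -/
noncomputable def aug : LA →ₐ[ℤ] ℤ := AddMonoidAlgebra.lift ℤ ℤ (ℤ × ℤ) 1

lemma aug_single (a : ℤ × ℤ) (r : ℤ) : aug (AddMonoidAlgebra.single a r) = r := by
  simp [aug, AddMonoidAlgebra.lift_single]

/-- there is no `c` in the field of fractions `K` of `A` such that all
entries of `c·P` lie in `A` and `det(c·P)` is a unit of `A`.  (Entries of `c·P` lying
in `A` is expressed by exhibiting a matrix `M` over `A` mapping to `c·P`, and then
`det(c·P)` being a unit of `A` means `det M` is a unit of `A`.) -/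
theorem no_unimodular_rescaling :
    ¬ ∃ (c : FractionRing LA) (M : Matrix (Fin 3) (Fin 3) LA),
      M.map (algebraMap LA (FractionRing LA)) =
        c • Pmat.map (algebraMap LA (FractionRing LA)) ∧
      IsUnit M.det := by
  rintro ⟨c, M, hM, hdet⟩
  set f := algebraMap LA (FractionRing LA)
  have hc : c = f (M 2 0) := by
    have := congrFun (congrFun hM 2) 0
    simpa [Pmat, Matrix.map_apply, Matrix.smul_apply] using this.symm
  have hP : Pmat.det = -(mon 1 (-2) + mon (-1) 2) := by
    simp [Pmat, Matrix.det_fin_three]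
  have hdet2 : f M.det = f (-(M 2 0 ^ 3 * (mon 1 (-2) + mon (-1) 2))) := by
    rw [RingHom.map_det, RingHom.mapMatrix_apply, hM, Matrix.det_smul,
      ← RingHom.mapMatrix_apply, ← RingHom.map_det, hP, hc]
    simp only [smul_eq_mul, map_neg, map_mul, map_pow, Fintype.card_fin]
    ring
  have hMdet : M.det = -(M 2 0 ^ 3 * (mon 1 (-2) + mon (-1) 2)) :=
    IsFractionRing.injective LA (FractionRing LA) hdet2
  rw [hMdet] at hdet
  have := hdet.map aug
  simp [mon, aug_single, Int.isUnit_iff] at this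
end

section
/- In the Hecke algebra H₃ of type B₃ over A = ℤ[V^{±1}, v^{±1}], the 3-dimensional representation ρ_λ given by ρ_λ(T_t) = [[V, Vv^{−1}+V^{−1}v, Vv^{−2}+V^{−1}v²],[0,−V^{−1},0],[0,0,−V^{−1}]], ρ_λ(T_{s₁}) = [[−v^{−1},0,0],[1,v,0],[0,0,v]], ρ_λ(T_{s₂}) = [[v,1,0],[0,−v^{−1},0],[0,1,v]] becomes absolutely irreducible over the field of fractions K of A; that is, the K-subalgebra of M₃(K) generated by these three matrices is all of M₃(K). -/
lemma mon_mul (i j k l : ℤ) : mon i j * mon k l = mon (i+k) (j+l) := by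
  simp [mon, AddMonoidAlgebra.single_mul_single, Prod.mk_add_mk]

lemma mon_zero : mon 0 0 = 1 := by
  simp [mon, AddMonoidAlgebra.one_def, Prod.mk_zero_zero]

lemma mon_ne_neg_one (i j : ℤ) (h : ¬(i = 0 ∧ j = 0)) : mon i j ≠ -1 := by
  intro he
  rw [mon, AddMonoidAlgebra.one_def, ← AddMonoidAlgebra.single_neg] at he
  rw [AddMonoidAlgebra.single_inj] at he
  rcases he with ⟨h1, _⟩ | ⟨h1, _⟩
  · exact absurd h1 (by simpa [Prod.ext_iff] using h)
  · norm_num at h1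

lemma mon_add_ne_zero (i j k l : ℤ) (h : ¬(i = k ∧ j = l)) : mon i j + mon k l ≠ 0 := by
  intro he
  have h2 := congrArg (· * mon (-k) (-l)) he
  simp only [add_mul, mon_mul, zero_mul, add_neg_cancel, mon_zero] at h2
  exact mon_ne_neg_one (i + -k) (j + -l) (by omega) (eq_neg_of_add_eq_zero_left h2)

/-- The image of `mon i j` in the fraction field. -/
noncomputable def mK (i j : ℤ) : FractionRing LA := algebraMap LA (FractionRing LA) (mon i j)

lemma mK_mul (i j k l : ℤ) : mK i j * mK k l = mK (i+k) (j+l) := by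
  rw [mK, mK, mK, ← map_mul, mon_mul]

lemma mK_add_ne_zero (i j k l : ℤ) (h : ¬(i = k ∧ j = l)) : mK i j + mK k l ≠ 0 := by
  rw [mK, mK, ← map_add]
  exact (map_ne_zero_iff _ (IsFractionRing.injective LA (FractionRing LA))).mpr
    (mon_add_ne_zero i j k l h)

open Matrix

/-- `E i j` -/
noncomputable abbrev EK (i j : Fin 3) : Matrix (Fin 3) (Fin 3) (FractionRing LA) :=
  Matrix.single i j 1

noncomputable abbrev TK : Matrix (Fin 3) (Fin 3) (FractionRing LA) :=
  !![mK 1 0, mK 1 (-1) + mK (-1) 1, mK 1 (-2) + mK (-1) 2;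
     0, -mK (-1) 0, 0;
     0, 0, -mK (-1) 0]

noncomputable abbrev S1K : Matrix (Fin 3) (Fin 3) (FractionRing LA) :=
  !![-mK 0 (-1), 0, 0;
     1, mK 0 1, 0;
     0, 0, mK 0 1]

noncomputable abbrev S2K : Matrix (Fin 3) (Fin 3) (FractionRing LA) :=
  !![mK 0 1, 1, 0;
     0, -mK 0 (-1), 0;
     0, 1, mK 0 1]

lemma map_Mt : Mt.map (algebraMap LA (FractionRing LA)) = TK := by
  ext i j
  fin_cases i <;> fin_cases j <;>
    simp [Mt, mK, map_add, map_neg, Matrix.vecHead, Matrix.vecTail]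

lemma map_Ms1 : Ms1.map (algebraMap LA (FractionRing LA)) = S1K := by
  ext i j
  fin_cases i <;> fin_cases j <;>
    simp [Ms1, mK, map_neg, Matrix.vecHead, Matrix.vecTail]

lemma map_Ms2 : Ms2.map (algebraMap LA (FractionRing LA)) = S2K := by
  ext i j
  fin_cases i <;> fin_cases j <;>
    simp [Ms2, mK, map_neg, Matrix.vecHead, Matrix.vecTail]

lemma EK00 : EK 0 0 = !![1,0,0;0,0,0;0,0,0] := by
  ext i j; fin_cases i <;> fin_cases j <;>
    simp [Matrix.single, Fin.ext_iff, Matrix.vecHead, Matrix.vecTail]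

lemma EK10 : EK 1 0 = !![0,0,0;1,0,0;0,0,0] := by
  ext i j; fin_cases i <;> fin_cases j <;>
    simp [Matrix.single, Fin.ext_iff, Matrix.vecHead, Matrix.vecTail]

lemma EK01 : EK 0 1 = !![0,1,0;0,0,0;0,0,0] := by
  ext i j; fin_cases i <;> fin_cases j <;>
    simp [Matrix.single, Fin.ext_iff, Matrix.vecHead, Matrix.vecTail]

lemma EK11 : EK 1 1 = !![0,0,0;0,1,0;0,0,0] := by
  ext i j; fin_cases i <;> fin_cases j <;>
    simp [Matrix.single, Fin.ext_iff, Matrix.vecHead, Matrix.vecTail]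

lemma EK21 : EK 2 1 = !![0,0,0;0,0,0;0,1,0] := by
  ext i j; fin_cases i <;> fin_cases j <;>
    simp [Matrix.single, Fin.ext_iff, Matrix.vecHead, Matrix.vecTail]

lemma EK02 : EK 0 2 = !![0,0,1;0,0,0;0,0,0] := by
  ext i j; fin_cases i <;> fin_cases j <;>
    simp [Matrix.single, Fin.ext_iff, Matrix.vecHead, Matrix.vecTail]

lemma step1 : (TK + (mK (-1) 0) • 1) * (S1K - (mK 0 1) • 1)
    = (-(mK 1 1 + mK (-1) (-1))) • EK 0 0 := by
  rw [EK00]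
  ext i j
  fin_cases i <;> fin_cases j <;>
    simp [Matrix.mul_apply, Fin.sum_univ_three, Matrix.one_apply, Matrix.vecHead, Matrix.vecTail,
      mul_add, add_mul, mul_neg, neg_mul, sub_eq_add_neg, mK_mul] <;>
    abel

lemma step2 : S1K * EK 0 0 + (mK 0 (-1)) • EK 0 0 = EK 1 0 := by
  rw [EK00, EK10]
  ext i j
  fin_cases i <;> fin_cases j <;>
    simp [Matrix.mul_apply, Fin.sum_univ_three, Matrix.vecHead, Matrix.vecTail, mK_mul]

lemma step3 : EK 0 0 * S2K - (mK 0 1) • EK 0 0 = EK 0 1 := by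
  rw [EK00, EK01]
  ext i j
  fin_cases i <;> fin_cases j <;>
    simp [Matrix.mul_apply, Fin.sum_univ_three, Matrix.vecHead, Matrix.vecTail, mK_mul]

set_option maxHeartbeats 1000000 in
lemma step5 : S2K * EK 1 1 - EK 0 1 + (mK 0 (-1)) • EK 1 1 = EK 2 1 := by
  rw [EK11, EK01, EK21]
  ext i j
  fin_cases i <;> fin_cases j <;>
    simp [Matrix.mul_apply, Fin.sum_univ_three, Matrix.vecHead, Matrix.vecTail, mK_mul,
      sub_eq_add_neg]

set_option maxHeartbeats 1000000 in
lemma step6 : EK 0 0 * TK - (mK 1 0) • EK 0 0 - (mK 1 (-1) + mK (-1) 1) • EK 0 1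
    = (mK 1 (-2) + mK (-1) 2) • EK 0 2 := by
  rw [EK00, EK01, EK02]
  ext i j
  fin_cases i <;> fin_cases j <;>
    simp [Matrix.mul_apply, Fin.sum_univ_three, Matrix.vecHead, Matrix.vecTail, mK_mul,
      sub_eq_add_neg]

/-- over the field of fractions `K` of `A`, the representation `ρ_λ`
is absolutely irreducible: the `K`-subalgebra of `M₃(K)` generated by the images of
the three matrices is all of `M₃(K)`. -/
theorem rho_lambda_absolutely_irreducible :
    Algebra.adjoin (FractionRing LA)
      ({Mt.map (algebraMap LA (FractionRing LA)),
        Ms1.map (algebraMap LA (FractionRing LA)),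
        Ms2.map (algebraMap LA (FractionRing LA))} :
          Set (Matrix (Fin 3) (Fin 3) (FractionRing LA))) = ⊤ := by
  classical
  set S := Algebra.adjoin (FractionRing LA)
      ({Mt.map (algebraMap LA (FractionRing LA)),
        Ms1.map (algebraMap LA (FractionRing LA)),
        Ms2.map (algebraMap LA (FractionRing LA))} :
          Set (Matrix (Fin 3) (Fin 3) (FractionRing LA))) with hSdef
  have hT : TK ∈ S := map_Mt ▸ Algebra.subset_adjoin (by simp)
  have hS1 : S1K ∈ S := map_Ms1 ▸ Algebra.subset_adjoin (by simp)
  have hS2 : S2K ∈ S := map_Ms2 ▸ Algebra.subset_adjoin (by simp)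
  -- E 0 0
  have hc : (-(mK 1 1 + mK (-1) (-1))) ≠ 0 :=
    neg_ne_zero.mpr (mK_add_ne_zero 1 1 (-1) (-1) (by norm_num))
  have h00 : EK 0 0 ∈ S := by
    have heq : EK 0 0 = (-(mK 1 1 + mK (-1) (-1)))⁻¹ •
        ((TK + (mK (-1) 0) • 1) * (S1K - (mK 0 1) • 1)) := by
      rw [step1, smul_smul, inv_mul_cancel₀ hc, one_smul]
    rw [heq]
    exact S.smul_mem (S.mul_mem (S.add_mem hT (S.smul_mem S.one_mem _))
      (S.sub_mem hS1 (S.smul_mem S.one_mem _))) _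
  have h10 : EK 1 0 ∈ S := by
    rw [← step2]; exact S.add_mem (S.mul_mem hS1 h00) (S.smul_mem h00 _)
  have h01 : EK 0 1 ∈ S := by
    rw [← step3]; exact S.sub_mem (S.mul_mem h00 hS2) (S.smul_mem h00 _)
  have h11 : EK 1 1 ∈ S := by
    have : EK 1 0 * EK 0 1 = EK 1 1 := by
      rw [single_mul_single_same, one_mul]
    rw [← this]; exact S.mul_mem h10 h01
  have h21 : EK 2 1 ∈ S := by
    rw [← step5]
    exact S.add_mem (S.sub_mem (S.mul_mem hS2 h11) h01) (S.smul_mem h11 _)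
  have hd : (mK 1 (-2) + mK (-1) 2) ≠ 0 := mK_add_ne_zero 1 (-2) (-1) 2 (by norm_num)
  have h02 : EK 0 2 ∈ S := by
    have heq : EK 0 2 = (mK 1 (-2) + mK (-1) 2)⁻¹ •
        (EK 0 0 * TK - (mK 1 0) • EK 0 0 - (mK 1 (-1) + mK (-1) 1) • EK 0 1) := by
      rw [step6, smul_smul, inv_mul_cancel₀ hd, one_smul]
    rw [heq]
    exact S.smul_mem (S.sub_mem (S.sub_mem (S.mul_mem h00 hT) (S.smul_mem h00 _))
      (S.smul_mem h01 _)) _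
  have h12 : EK 1 2 ∈ S := by
    have : EK 1 0 * EK 0 2 = EK 1 2 := by rw [single_mul_single_same, one_mul]
    rw [← this]; exact S.mul_mem h10 h02
  have h22 : EK 2 2 ∈ S := by
    have : EK 2 1 * EK 1 2 = EK 2 2 := by rw [single_mul_single_same, one_mul]
    rw [← this]; exact S.mul_mem h21 h12
  have h20 : EK 2 0 ∈ S := by
    have : EK 2 1 * EK 1 0 = EK 2 0 := by rw [single_mul_single_same, one_mul]
    rw [← this]; exact S.mul_mem h21 h10
  have hE : ∀ i j : Fin 3, EK i j ∈ S := by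
    intro i j
    fin_cases i <;> fin_cases j <;> assumption
  apply top_unique
  intro M _
  rw [matrix_eq_sum_single M]
  refine sum_mem fun i _ => sum_mem fun j _ => ?_
  have : Matrix.single i j (M i j) = (M i j) • EK i j := by
    rw [smul_single, smul_eq_mul, mul_one]
  rw [this]
  exact S.smul_mem (hE i j) _
end
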